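/- If h = f ⋆_c g is the canonical convolution of f, g ∈ L²(ℝ²), then the 2D non-separable LCT of h satisfies (L_M h)(ξ) = e^{-iπ ξᵀDB⁻¹ξ} (L_M f)(ξ) (L_M g)(ξ) for all ξ ∈ ℝ². -/

import Mathlib

open MeasureTheory Matrix Complex

noncomputable section

abbrev V2 : Type := Fin 2 → ℝ
abbrev Z2 : Type := Fin 2 → ℤ
abbrev M2 : Type := Matrix (Fin 2) (Fin 2) ℝ

/-- cast an integer vector to a real vector -/
def zc (k : Z2) : V2 := fun i => (k i : ℝ)

/-- `ePi r = e^{iπ r}` -/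
def ePi (r : ℝ) : ℂ := Complex.exp (Real.pi * Complex.I * r)

/-- quadratic/bilinear form `xᵀ P y` -/
def Q (P : M2) (x y : V2) : ℝ := x ⬝ᵥ P.mulVec y

/-- `√(det (iB))` (note `det(iB) = i² det B` for 2×2 `B`) -/
def sdet (B : M2) : ℂ := ((Complex.I ^ 2 * (B.det : ℂ))) ^ ((1 : ℂ)/2)

/-- the chirp `λ_M(t) = e^{iπ tᵀB⁻¹At}` -/
def lam (A B : M2) (t : V2) : ℂ := ePi (Q (B⁻¹ * A) t t)

/-- the continuous 2D non-separable LCT -/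
def LCT (A B D : M2) (f : V2 → ℂ) (ξ : V2) : ℂ :=
  (sdet B)⁻¹ * ∫ u : V2, f u * ePi (Q (B⁻¹ * A) u u - 2 * Q B⁻¹ u ξ + Q (D * B⁻¹) ξ ξ)

/-- the 2D discrete-time non-separable LCT -/
def DLCT (A B D : M2) (s : Z2 → ℂ) (ξ : V2) : ℂ :=
  (sdet B)⁻¹ * ∑' k : Z2,
    s k * ePi (Q (B⁻¹ * A) (zc k) (zc k) - 2 * Q B⁻¹ (zc k) ξ + Q (D * B⁻¹) ξ ξ)

/-- the canonical (continuous) convolution `⋆_c` -/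
def cconv (A B : M2) (f g : V2 → ℂ) (t : V2) : ℂ :=
  ePi (-(Q (B⁻¹ * A) t t)) * (sdet B)⁻¹ *
    ∫ x : V2, lam A B (t - x) * f (t - x) * (lam A B x * g x)

/-- the canonical semi-discrete convolution `⋆_{sd}` -/
def sdconv (A B : M2) (s : Z2 → ℂ) (g : V2 → ℂ) (t : V2) : ℂ :=
  ePi (-(Q (B⁻¹ * A) t t)) * (sdet B)⁻¹ *
    ∑' k : Z2, lam A B (zc k) * s k * (lam A B (t - zc k) * g (t - zc k))

/-- the canonical discrete convolution `⋆_d` -/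
def dconv (A B : M2) (s c : Z2 → ℂ) (l : Z2) : ℂ :=
  ePi (-(Q (B⁻¹ * A) (zc l) (zc l))) * (sdet B)⁻¹ *
    ∑' k : Z2, lam A B (zc k) * s k * (lam A B (zc (l - k)) * c (l - k))

/-- symplecticity of the block matrix `[A,B;C,D]` -/
def Symp (A B C D : M2) : Prop :=
  A * Bᵀ = B * Aᵀ ∧ C * Dᵀ = D * Cᵀ ∧ A * Dᵀ - B * Cᵀ = 1

/-- the unit half-open square `[0,1)²` -/
def box : Set V2 := Set.univ.pi fun _ => Set.Ico (0:ℝ) 1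

/-- real cast of an integer matrix -/
def Mr (M : Matrix (Fin 2) (Fin 2) ℤ) : M2 := M.map (Int.cast : ℤ → ℝ)

/-- the set `N(M)` of integer points in the fundamental parallelepiped -/
def NM (M : Matrix (Fin 2) (Fin 2) ℤ) : Set Z2 :=
  {k : Z2 | ∃ x : V2, x ∈ box ∧ zc k = (Mr M).mulVec x}

/-- the discrete time Fourier transform -/
def DTFT (d : Z2 → ℂ) (ξ : V2) : ℂ := ∑' k : Z2, d k * ePi (-(2 * (zc k ⬝ᵥ ξ)))

open Convolution

lemma ePi_add (a b : ℝ) : ePi (a + b) = ePi a * ePi b := by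
  unfold ePi; rw [← Complex.exp_add]; congr 1; push_cast; ring

lemma ePi_zero : ePi 0 = 1 := by simp [ePi]

lemma norm_ePi (r : ℝ) : ‖ePi r‖ = 1 := by
  simp [ePi, Complex.norm_exp]

lemma Q_sub_left (P : M2) (t x ξ : V2) : Q P (t - x) ξ = Q P t ξ - Q P x ξ := by
  simp [Q, sub_dotProduct]

lemma contQ (P P' : M2) (ξ : V2) :
    Continuous fun u : V2 => ePi (Q P u u - 2 * Q P' u ξ) := by
  unfold ePi Q
  simp only [dotProduct, Matrix.mulVec, dotProduct]
  fun_prop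

/-- Canonical convolution theorem for the 2D non-separable LCT:
`L_M (f ⋆_c g) (ξ) = e^{-iπ ξᵀDB⁻¹ξ} (L_M f)(ξ) (L_M g)(ξ)`. -/
theorem lct_cconv (A B C D : M2) (hSymp : Symp A B C D) (hB : B.det ≠ 0)
    (f g : V2 → ℂ) (hf : Integrable f) (hg : Integrable g)
    (hfg : Integrable (cconv A B f g)) :
    ∀ ξ : V2, LCT A B D (cconv A B f g) ξ =
      ePi (-(Q (D * B⁻¹) ξ ξ)) * LCT A B D f ξ * LCT A B D g ξ := by
  intro ξ
  set χ : V2 → ℂ := fun u => ePi (Q (B⁻¹ * A) u u - 2 * Q B⁻¹ u ξ) with hχ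
  have hχcont : Continuous χ := contQ _ _ _
  set F : V2 → ℂ := fun u => χ u * f u with hFdef
  set G : V2 → ℂ := fun u => χ u * g u with hGdef
  have hχm : AEStronglyMeasurable χ (volume : Measure V2) :=
    hχcont.aestronglyMeasurable
  have hχbd : ∃ C, ∀ u, ‖χ u‖ ≤ C := ⟨1, fun u => le_of_eq (norm_ePi _)⟩
  have hF : Integrable F := hf.bdd_mul hχm (Filter.Eventually.of_forall hχbd.choose_spec)
  have hG : Integrable G := hg.bdd_mul hχm (Filter.Eventually.of_forall hχbd.choose_spec)
  -- rewriting any LCT in terms of ∫ χ · h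
  have hLCT : ∀ h : V2 → ℂ,
      LCT A B D h ξ = (sdet B)⁻¹ * (ePi (Q (D * B⁻¹) ξ ξ) * ∫ u, χ u * h u) := by
    intro h
    unfold LCT
    rw [show (∫ u, h u * ePi (Q (B⁻¹ * A) u u - 2 * Q B⁻¹ u ξ + Q (D * B⁻¹) ξ ξ))
        = ∫ u, (χ u * h u) * ePi (Q (D * B⁻¹) ξ ξ) by
      congr 1; funext u; rw [ePi_add]; simp only [hχ]; ring]
    rw [integral_mul_const]; ring
  -- the key pointwise identity
  have hpt : ∀ t, χ t * cconv A B f g t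
      = (sdet B)⁻¹ * (G ⋆[ContinuousLinearMap.mul ℝ ℂ, volume] F) t := by
    intro t
    unfold cconv
    have h1 : χ t * ePi (-(Q (B⁻¹ * A) t t)) = ePi (-(2 * Q B⁻¹ t ξ)) := by
      simp only [hχ]
      rw [← ePi_add]
      congr 1; ring
    have h2 : ePi (-(2 * Q B⁻¹ t ξ)) *
        (∫ x : V2, lam A B (t - x) * f (t - x) * (lam A B x * g x))
        = ∫ x : V2, G x * F (t - x) := by
      rw [← integral_const_mul]
      congr 1; funext x
      simp only [hFdef, hGdef, hχ, lam]
      have hsplit : ePi (-(2 * Q B⁻¹ t ξ))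
          = ePi (-(2 * Q B⁻¹ (t - x) ξ)) * ePi (-(2 * Q B⁻¹ x ξ)) := by
        rw [← ePi_add]; congr 1; rw [Q_sub_left]; ring
      rw [sub_eq_add_neg (Q (B⁻¹ * A) x x), sub_eq_add_neg (Q (B⁻¹ * A) (t - x) (t - x)),
        ePi_add, ePi_add, hsplit]
      ring
    calc χ t * (ePi (-(Q (B⁻¹ * A) t t)) * (sdet B)⁻¹ *
          ∫ x : V2, lam A B (t - x) * f (t - x) * (lam A B x * g x))
        = (sdet B)⁻¹ * ((χ t * ePi (-(Q (B⁻¹ * A) t t))) *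
          ∫ x : V2, lam A B (t - x) * f (t - x) * (lam A B x * g x)) := by ring
      _ = (sdet B)⁻¹ * ∫ x : V2, G x * F (t - x) := by rw [h1, h2]
      _ = (sdet B)⁻¹ * (G ⋆[ContinuousLinearMap.mul ℝ ℂ, volume] F) t := by
          rfl
  have hint : (∫ t, χ t * cconv A B f g t) = (sdet B)⁻¹ * ((∫ t, G t) * (∫ t, F t)) := by
    rw [show (∫ t, χ t * cconv A B f g t)
        = ∫ t, (sdet B)⁻¹ * (G ⋆[ContinuousLinearMap.mul ℝ ℂ, volume] F) t by
      congr 1; funext t; exact hpt t]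
    rw [integral_const_mul, integral_convolution _ hG hF]
    rfl
  rw [hLCT (cconv A B f g), hLCT f, hLCT g, hint]
  have hcancel : ePi (-(Q (D * B⁻¹) ξ ξ)) * ePi (Q (D * B⁻¹) ξ ξ) = 1 := by
    rw [← ePi_add, neg_add_cancel, ePi_zero]
  calc (sdet B)⁻¹ * (ePi (Q (D * B⁻¹) ξ ξ) * ((sdet B)⁻¹ * ((∫ t, G t) * ∫ t, F t)))
      = (ePi (-(Q (D * B⁻¹) ξ ξ)) * ePi (Q (D * B⁻¹) ξ ξ)) *
        ((sdet B)⁻¹ * (ePi (Q (D * B⁻¹) ξ ξ) * ((sdet B)⁻¹ *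
          ((∫ t, G t) * ∫ t, F t)))) := by rw [hcancel]; ring
    _ = ePi (-(Q (D * B⁻¹) ξ ξ)) * ((sdet B)⁻¹ * (ePi (Q (D * B⁻¹) ξ ξ) * ∫ u, χ u * f u))
        * ((sdet B)⁻¹ * (ePi (Q (D * B⁻¹) ξ ξ) * ∫ u, χ u * g u)) := by
        simp only [hFdef, hGdef]; ring
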